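/- (Theorem 1) Let 1 ≤ m ≤ n. Let A be an m×(n−1) binary matrix with guard bits a_{i,−1} = 1 and a_{i,n−1} = 0, and let B be an (m−1)×n binary matrix with guard bits b_{−1,j} = 1 and b_{m−1,j} = 0. Define Δa_{i,j} = a_{i,j−1} − a_{i,j} and Δb_{i,j} = b_{i−1,j} − b_{i,j} for 0 ≤ i ≤ m−1 and 0 ≤ j ≤ n−1, and set E_d^{mn}(A,B) = (1/2)·Σ_{i,j} (Δa_{i,j})^2 + (1/2)·Σ_{i,j} (Δb_{i,j})^2 + (1/2)·Σ_{i,j} (Δa_{i,j} − Δb_{i,j})^2. Then E_d^{mn}(A,B) ≥ n, and E_d^{mn}(A,B) = n if and only if A and B satisfy the row domain-wall condition, the column domain-wall condition, and the dual-permutation condition. -/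
import Mathlib


/-- Guard-extended row of the matrix `A` (rows of length `n-1`, guard bits
`a_{i,-1} = 1` at shifted index `0` and `a_{i,n-1} = 0` at shifted index `n`). -/
def gA (n : ℕ) (A : ℕ → ℕ → ℤ) (i j : ℕ) : ℤ :=
  if j = 0 then 1 else if j < n then A i (j - 1) else 0

/-- `Δa_{i,j} = a_{i,j-1} - a_{i,j}` computed on the guard-extended rows of `A`. -/
def dA (n : ℕ) (A : ℕ → ℕ → ℤ) (i j : ℕ) : ℤ := gA n A i j - gA n A i (j + 1)

/-- Guard-extended column of the matrix `B` (columns of length `m-1`, guard bits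
`b_{-1,j} = 1` at shifted index `0` and `b_{m-1,j} = 0` at shifted index `m`). -/
def gB (m : ℕ) (B : ℕ → ℕ → ℤ) (i j : ℕ) : ℤ :=
  if i = 0 then 1 else if i < m then B (i - 1) j else 0

/-- `Δb_{i,j} = b_{i-1,j} - b_{i,j}` computed on the guard-extended columns of `B`. -/
def dB (m : ℕ) (B : ℕ → ℕ → ℤ) (i j : ℕ) : ℤ := gB m B i j - gB m B (i + 1) j

/-- Row domain-wall condition: every guard-extended row of the `m × (n-1)` matrix `A`
is a domain-wall vector. -/
def RowDW (m n : ℕ) (A : ℕ → ℕ → ℤ) : Prop :=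
  ∀ i < m, ∃ t ≤ n - 1, ∀ j < n - 1, (j < t → A i j = 1) ∧ (t ≤ j → A i j = 0)

/-- Column domain-wall condition: every guard-extended column of the `(m-1) × n` matrix `B`
is a domain-wall vector. -/
def ColDW (m n : ℕ) (B : ℕ → ℕ → ℤ) : Prop :=
  ∀ j < n, ∃ t ≤ m - 1, ∀ i < m - 1, (i < t → B i j = 1) ∧ (t ≤ i → B i j = 0)

/-- The dual-matrix domain-wall QUBO energy
`E_dᵐⁿ(A,B) = ½ ΣΣ (Δa)² + ½ ΣΣ (Δb)² + ½ ΣΣ (Δa - Δb)²`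
over `0 ≤ i ≤ m-1` and `0 ≤ j ≤ n-1`. -/
def Ed (m n : ℕ) (A B : ℕ → ℕ → ℤ) : ℚ :=
  (1 / 2 : ℚ) * ∑ i ∈ Finset.range m, ∑ j ∈ Finset.range n, (dA n A i j : ℚ) ^ 2 +
  (1 / 2 : ℚ) * ∑ i ∈ Finset.range m, ∑ j ∈ Finset.range n, (dB m B i j : ℚ) ^ 2 +
  (1 / 2 : ℚ) * ∑ i ∈ Finset.range m, ∑ j ∈ Finset.range n,
    ((dA n A i j : ℚ) - (dB m B i j : ℚ)) ^ 2

/-- Dual-permutation condition: for all `i < m` and `j < n`, if `Δa_{i,j} = 1` then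
`Δb_{i,j} = 1`. -/
def DualPerm (m n : ℕ) (A B : ℕ → ℕ → ℤ) : Prop :=
  ∀ i < m, ∀ j < n, dA n A i j = 1 → dB m B i j = 1

lemma key_nonneg (a b : ℤ) (ha : a = -1 ∨ a = 0 ∨ a = 1) (hb : b = -1 ∨ b = 0 ∨ b = 1) :
    0 ≤ a^2 + b^2 - a*b - b := by
  rcases ha with rfl|rfl|rfl <;> rcases hb with rfl|rfl|rfl <;> norm_num

lemma key_eq (a b : ℤ) (ha : a = -1 ∨ a = 0 ∨ a = 1) (hb : b = -1 ∨ b = 0 ∨ b = 1) :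
    a^2 + b^2 - a*b - b = 0 ↔ ((a = 0 ∨ a = 1) ∧ (b = 0 ∨ b = 1) ∧ (a = 1 → b = 1)) := by
  rcases ha with rfl|rfl|rfl <;> rcases hb with rfl|rfl|rfl <;> norm_num

lemma gA_binary {m n : ℕ} (A : ℕ → ℕ → ℤ)
    (hA : ∀ i < m, ∀ j < n - 1, A i j = 0 ∨ A i j = 1) {i : ℕ} (hi : i < m) (j : ℕ) :
    gA n A i j = 0 ∨ gA n A i j = 1 := by
  unfold gA; split_ifs with h1 h2
  · right; rfl
  · exact hA i hi (j-1) (by omega)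
  · left; rfl

lemma dA_mem {m n : ℕ} (A : ℕ → ℕ → ℤ)
    (hA : ∀ i < m, ∀ j < n - 1, A i j = 0 ∨ A i j = 1) {i : ℕ} (hi : i < m) (j : ℕ) :
    dA n A i j = -1 ∨ dA n A i j = 0 ∨ dA n A i j = 1 := by
  have h1 := gA_binary A hA hi j
  have h2 := gA_binary A hA hi (j+1)
  unfold dA; omega

lemma gB_binary {m n : ℕ} (B : ℕ → ℕ → ℤ)
    (hB : ∀ i < m - 1, ∀ j < n, B i j = 0 ∨ B i j = 1) {j : ℕ} (hj : j < n) (i : ℕ) :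
    gB m B i j = 0 ∨ gB m B i j = 1 := by
  unfold gB; split_ifs with h1 h2
  · right; rfl
  · exact hB (i-1) (by omega) j hj
  · left; rfl

lemma dB_mem {m n : ℕ} (B : ℕ → ℕ → ℤ)
    (hB : ∀ i < m - 1, ∀ j < n, B i j = 0 ∨ B i j = 1) {j : ℕ} (hj : j < n) (i : ℕ) :
    dB m B i j = -1 ∨ dB m B i j = 0 ∨ dB m B i j = 1 := by
  have h1 := gB_binary B hB hj i
  have h2 := gB_binary B hB hj (i+1)
  unfold dB; omega

lemma sum_dA {n : ℕ} (A : ℕ → ℕ → ℤ) (i : ℕ) (hn : 0 < n) :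
    ∑ j ∈ Finset.range n, dA n A i j = 1 := by
  unfold dA
  rw [Finset.sum_range_sub' (gA n A i)]
  have h0 : gA n A i 0 = 1 := by unfold gA; simp
  have h1 : gA n A i n = 0 := by unfold gA; rw [if_neg (by omega), if_neg (by omega)]
  rw [h0, h1]; ring

lemma sum_dB {m : ℕ} (B : ℕ → ℕ → ℤ) (j : ℕ) (hm : 0 < m) :
    ∑ i ∈ Finset.range m, dB m B i j = 1 := by
  unfold dB
  rw [Finset.sum_range_sub' (fun i => gB m B i j)]
  have h0 : gB m B 0 j = 1 := by unfold gB; simp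
  have h1 : gB m B m j = 0 := by unfold gB; rw [if_neg (by omega), if_neg (by omega)]
  rw [h0, h1]; ring

lemma gA_dw {n t : ℕ} {A : ℕ → ℕ → ℤ} {i : ℕ} (ht : t ≤ n - 1) (hn : 1 ≤ n)
    (h : ∀ j < n - 1, (j < t → A i j = 1) ∧ (t ≤ j → A i j = 0)) (j : ℕ) :
    gA n A i j = if j ≤ t then 1 else 0 := by
  unfold gA
  rcases Nat.eq_zero_or_pos j with rfl|hj
  · simp
  · rw [if_neg (by omega)]
    by_cases hjn : j < n
    · rw [if_pos hjn]
      by_cases hjt : j ≤ t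
      · rw [if_pos hjt]; exact (h (j-1) (by omega)).1 (by omega)
      · rw [if_neg hjt]; exact (h (j-1) (by omega)).2 (by omega)
    · rw [if_neg hjn, if_neg (by omega)]

lemma gB_dw {m t : ℕ} {B : ℕ → ℕ → ℤ} {j : ℕ} (ht : t ≤ m - 1) (hm : 1 ≤ m)
    (h : ∀ i < m - 1, (i < t → B i j = 1) ∧ (t ≤ i → B i j = 0)) (i : ℕ) :
    gB m B i j = if i ≤ t then 1 else 0 := by
  unfold gB
  rcases Nat.eq_zero_or_pos i with rfl|hi
  · simp
  · rw [if_neg (by omega)]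
    by_cases him : i < m
    · rw [if_pos him]
      by_cases hit : i ≤ t
      · rw [if_pos hit]; exact (h (i-1) (by omega)).1 (by omega)
      · rw [if_neg hit]; exact (h (i-1) (by omega)).2 (by omega)
    · rw [if_neg him, if_neg (by omega)]

lemma dA_dw {n t : ℕ} {A : ℕ → ℕ → ℤ} {i : ℕ} (ht : t ≤ n - 1) (hn : 1 ≤ n)
    (h : ∀ j < n - 1, (j < t → A i j = 1) ∧ (t ≤ j → A i j = 0)) (j : ℕ) :
    dA n A i j = 0 ∨ dA n A i j = 1 := by
  unfold dA
  rw [gA_dw ht hn h, gA_dw ht hn h]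
  split_ifs <;> [left; right; omega; left] <;> ring

lemma dB_dw {m t : ℕ} {B : ℕ → ℕ → ℤ} {j : ℕ} (ht : t ≤ m - 1) (hm : 1 ≤ m)
    (h : ∀ i < m - 1, (i < t → B i j = 1) ∧ (t ≤ i → B i j = 0)) (i : ℕ) :
    dB m B i j = 0 ∨ dB m B i j = 1 := by
  unfold dB
  rw [gB_dw ht hm h, gB_dw ht hm h]
  split_ifs <;> [left; right; omega; left] <;> ring

lemma rowdw_of_dA {m n : ℕ} {A : ℕ → ℕ → ℤ}
    (hA : ∀ i < m, ∀ j < n - 1, A i j = 0 ∨ A i j = 1) (hn : 1 ≤ n) {i : ℕ} (hi : i < m)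
    (h : ∀ j < n, dA n A i j = 0 ∨ dA n A i j = 1) :
    ∃ t ≤ n - 1, ∀ j < n - 1, (j < t → A i j = 1) ∧ (t ≤ j → A i j = 0) := by
  classical
  have step : ∀ l, gA n A i l = 0 → gA n A i (l+1) = 0 := by
    intro l hl
    by_cases hln : l < n
    · have hd := h l hln
      have hg := gA_binary A hA hi (l+1)
      unfold dA at hd; omega
    · unfold gA; rw [if_neg (by omega), if_neg (by omega)]
  have prop : ∀ l d, gA n A i l = 0 → gA n A i (l + d) = 0 := by
    intro l d hl
    induction d with
    | zero => exact hl
    | succ d ih => exact step (l + d) ih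
  have hp : gA n A i ((n-1)+1) = 0 := by
    have he : (n-1)+1 = n := by omega
    rw [he]; unfold gA; rw [if_neg (by omega), if_neg (by omega)]
  have hex : ∃ j, gA n A i (j+1) = 0 := ⟨n-1, hp⟩
  set t := Nat.find hex with htdef
  have htspec : gA n A i (t+1) = 0 := Nat.find_spec hex
  have htle : t ≤ n - 1 := Nat.find_min' hex hp
  refine ⟨t, htle, fun j hj => ⟨fun hjt => ?_, fun hjt => ?_⟩⟩
  · have hmin : ¬ gA n A i (j+1) = 0 := Nat.find_min hex hjt
    have hg := gA_binary A hA hi (j+1)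
    have h1 : gA n A i (j+1) = 1 := by omega
    unfold gA at h1
    rw [if_neg (by omega), if_pos (by omega)] at h1
    rw [Nat.add_sub_cancel] at h1; exact h1
  · have h0 : gA n A i (j+1) = 0 := by
      have : (t+1) + (j - t) = j + 1 := by omega
      rw [← this]; exact prop _ _ htspec
    unfold gA at h0
    rw [if_neg (by omega), if_pos (by omega)] at h0
    rw [Nat.add_sub_cancel] at h0; exact h0

lemma coldw_of_dB {m n : ℕ} {B : ℕ → ℕ → ℤ}
    (hB : ∀ i < m - 1, ∀ j < n, B i j = 0 ∨ B i j = 1) (hm : 1 ≤ m) {j : ℕ} (hj : j < n)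
    (h : ∀ i < m, dB m B i j = 0 ∨ dB m B i j = 1) :
    ∃ t ≤ m - 1, ∀ i < m - 1, (i < t → B i j = 1) ∧ (t ≤ i → B i j = 0) := by
  classical
  have step : ∀ l, gB m B l j = 0 → gB m B (l+1) j = 0 := by
    intro l hl
    by_cases hlm : l < m
    · have hd := h l hlm
      have hg := gB_binary B hB hj (l+1)
      unfold dB at hd; omega
    · unfold gB; rw [if_neg (by omega), if_neg (by omega)]
  have prop : ∀ l d, gB m B l j = 0 → gB m B (l + d) j = 0 := by
    intro l d hl
    induction d with
    | zero => exact hl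
    | succ d ih => exact step (l + d) ih
  have hp : gB m B ((m-1)+1) j = 0 := by
    have he : (m-1)+1 = m := by omega
    rw [he]; unfold gB; rw [if_neg (by omega), if_neg (by omega)]
  have hex : ∃ i, gB m B (i+1) j = 0 := ⟨m-1, hp⟩
  set t := Nat.find hex with htdef
  have htspec : gB m B (t+1) j = 0 := Nat.find_spec hex
  have htle : t ≤ m - 1 := Nat.find_min' hex hp
  refine ⟨t, htle, fun i hi => ⟨fun hit => ?_, fun hit => ?_⟩⟩
  · have hmin : ¬ gB m B (i+1) j = 0 := Nat.find_min hex hit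
    have hg := gB_binary B hB hj (i+1)
    have h1 : gB m B (i+1) j = 1 := by omega
    unfold gB at h1
    rw [if_neg (by omega), if_pos (by omega)] at h1
    rw [Nat.add_sub_cancel] at h1; exact h1
  · have h0 : gB m B (i+1) j = 0 := by
      have : (t+1) + (i - t) = i + 1 := by omega
      rw [← this]; exact prop _ _ htspec
    unfold gB at h0
    rw [if_neg (by omega), if_pos (by omega)] at h0
    rw [Nat.add_sub_cancel] at h0; exact h0

/-- Theorem 1: `E_dᵐⁿ(A,B) ≥ n`, with equality iff `A` and `B` satisfy the row
domain-wall, column domain-wall, and dual-permutation conditions. -/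
theorem Ed_min_iff_conditions (m n : ℕ) (hm : 1 ≤ m) (hmn : m ≤ n)
    (A B : ℕ → ℕ → ℤ)
    (hA : ∀ i < m, ∀ j < n - 1, A i j = 0 ∨ A i j = 1)
    (hB : ∀ i < m - 1, ∀ j < n, B i j = 0 ∨ B i j = 1) :
    (n : ℚ) ≤ Ed m n A B ∧
    (Ed m n A B = n ↔ RowDW m n A ∧ ColDW m n B ∧ DualPerm m n A B) := by
  have hn : 1 ≤ n := le_trans hm hmn
  classical
  set T : ℕ → ℕ → ℤ := fun i j =>
    dA n A i j ^ 2 + dB m B i j ^ 2 - dA n A i j * dB m B i j - dB m B i j with hTdef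
  set S : ℤ := ∑ i ∈ Finset.range m, ∑ j ∈ Finset.range n,
    (dA n A i j ^ 2 + dB m B i j ^ 2 - dA n A i j * dB m B i j) with hSdef
  set U : ℤ := ∑ i ∈ Finset.range m, ∑ j ∈ Finset.range n, T i j with hUdef
  have hEd : Ed m n A B = (S : ℚ) := by
    have h1 : Ed m n A B = ∑ i ∈ Finset.range m, ∑ j ∈ Finset.range n,
        ((dA n A i j : ℚ) ^ 2 + (dB m B i j : ℚ) ^ 2 - (dA n A i j : ℚ) * (dB m B i j : ℚ)) := by
      unfold Ed
      simp only [Finset.mul_sum, ← Finset.sum_add_distrib]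
      refine Finset.sum_congr rfl fun i _ => Finset.sum_congr rfl fun j _ => ?_
      ring
    rw [h1, hSdef]
    push_cast
    rfl
  have hsb : ∑ i ∈ Finset.range m, ∑ j ∈ Finset.range n, dB m B i j = (n : ℤ) := by
    rw [Finset.sum_comm]
    rw [Finset.sum_congr rfl fun j _ => sum_dB B j hm]
    simp
  have hS : S = U + n := by
    have h2 : S = ∑ i ∈ Finset.range m, ∑ j ∈ Finset.range n, (T i j + dB m B i j) := by
      rw [hSdef]
      refine Finset.sum_congr rfl fun i _ => Finset.sum_congr rfl fun j _ => ?_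
      simp only [hTdef]; ring
    rw [h2]
    simp only [Finset.sum_add_distrib]
    rw [hsb, hUdef]
  have hTnn : ∀ i ∈ Finset.range m, ∀ j ∈ Finset.range n, 0 ≤ T i j := by
    intro i hi j hj
    rw [Finset.mem_range] at hi hj
    exact key_nonneg _ _ (dA_mem A hA hi j) (dB_mem B hB hj i)
  have hUnn : 0 ≤ U := by
    refine Finset.sum_nonneg fun i hi => Finset.sum_nonneg fun j hj => hTnn i hi j hj
  constructor
  · rw [hEd]
    have : (n : ℤ) ≤ S := by rw [hS]; linarith
    exact_mod_cast this
  · rw [hEd]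
    have hcast : ((n : ℕ) : ℚ) = ((n : ℤ) : ℚ) := by push_cast; ring
    rw [hcast, Int.cast_inj]
    have hU0 : S = n ↔ U = 0 := by omega
    rw [hU0]
    have hU0' : U = 0 ↔ ∀ i < m, ∀ j < n, T i j = 0 := by
      rw [hUdef, Finset.sum_eq_zero_iff_of_nonneg
        (fun i hi => Finset.sum_nonneg fun j hj => hTnn i hi j hj)]
      constructor
      · intro h i hi j hj
        have := h i (Finset.mem_range.mpr hi)
        rw [Finset.sum_eq_zero_iff_of_nonneg (fun j hj => hTnn i (Finset.mem_range.mpr hi) j hj)] at this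
        exact this j (Finset.mem_range.mpr hj)
      · intro h i hi
        rw [Finset.sum_eq_zero_iff_of_nonneg (fun j hj => hTnn i hi j hj)]
        intro j hj
        exact h i (Finset.mem_range.mp hi) j (Finset.mem_range.mp hj)
    rw [hU0']
    constructor
    · intro h
      have hpt : ∀ i < m, ∀ j < n,
          (dA n A i j = 0 ∨ dA n A i j = 1) ∧ (dB m B i j = 0 ∨ dB m B i j = 1) ∧
          (dA n A i j = 1 → dB m B i j = 1) := by
        intro i hi j hj
        exact (key_eq _ _ (dA_mem A hA hi j) (dB_mem B hB hj i)).mp (h i hi j hj)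
      refine ⟨?_, ?_, ?_⟩
      · intro i hi
        exact rowdw_of_dA hA hn hi (fun j hj => (hpt i hi j hj).1)
      · intro j hj
        exact coldw_of_dB hB hm hj (fun i hi => (hpt i hi j hj).2.1)
      · intro i hi j hj
        exact (hpt i hi j hj).2.2
    · rintro ⟨hrow, hcol, hdp⟩ i hi j hj
      obtain ⟨t, ht, hta⟩ := hrow i hi
      obtain ⟨s, hs, hsb'⟩ := hcol j hj
      refine (key_eq _ _ (dA_mem A hA hi j) (dB_mem B hB hj i)).mpr
        ⟨dA_dw ht hn hta j, dB_dw hs hm hsb' i, hdp i hi j hj⟩
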